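/- (Proposition 1: the repercussion-utility game is an exact potential game.) For every strategy profile a : M → Bool and every player i ∈ M, V(a) − V(flip_i a) = q_i(a) − q_i(flip_i a), where V(a) = ∑_{i ∈ M} U_i(a). -/

import Mathlib

/-- Flip the action of player `i` in profile `a`. -/
def flipProfile {M : Type*} [DecidableEq M] (i : M) (a : M → Bool) : M → Bool :=
  Function.update a i (!a i)

/-- Repercussion utility of player `i`: its own utility plus, if it is active,
the change its presence causes to its neighbors' utilities. -/
noncomputable def repUtil {M : Type*} [DecidableEq M] (N : M → Finset M)
    (U : M → (M → Bool) → ℝ) (i : M) (a : M → Bool) : ℝ :=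
  if a i then U i a + ∑ j ∈ N i, (U j a - U j (flipProfile i a)) else U i a

/-- Potential function: sum of the players' original utilities. -/
noncomputable def pot {M : Type*} [Fintype M] (U : M → (M → Bool) → ℝ)
    (a : M → Bool) : ℝ :=
  ∑ i, U i a

lemma flipProfile_flip_flip {M : Type*} [DecidableEq M] (i : M) (a : M → Bool) :
    flipProfile i (flipProfile i a) = a := by
  funext j
  by_cases h : j = i <;> simp [flipProfile, Function.update, h]

lemma flip_apply_ne {M : Type*} [DecidableEq M] {i j : M} (h : j ≠ i) (a : M → Bool) :
    flipProfile i a j = a j := by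
  simp [flipProfile, Function.update, h]

/-- Proposition 1: the repercussion-utility game is an exact potential game with
potential `V = ∑ i, U i`. -/
theorem repercussion_game_is_potential_game
    {M : Type*} [Fintype M] [DecidableEq M] [Nonempty M]
    (N : M → Finset M) (U : M → (M → Bool) → ℝ)
    (hself : ∀ i, i ∉ N i)
    (hsym : ∀ i j, j ∈ N i ↔ i ∈ N j)
    (hloc : ∀ i (a a' : M → Bool),
      (∀ j, j = i ∨ j ∈ N i → a j = a' j) → U i a = U i a')
    (a : M → Bool) (i : M) :
    pot U a - pot U (flipProfile i a) =
      repUtil N U i a - repUtil N U i (flipProfile i a) := by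
  -- far players' utilities unaffected
  have hfar : ∀ j, j ≠ i → j ∉ N i → U j a = U j (flipProfile i a) := by
    intro j hji hjN
    refine hloc j a _ ?_
    intro k hk
    have hki : k ≠ i := by
      rcases hk with rfl | h
      · exact hji
      · intro hki; exact hjN ((hsym j i).mp (hki ▸ h))
    exact (flip_apply_ne hki a).symm
  have hsum : pot U a - pot U (flipProfile i a) =
      (U i a - U i (flipProfile i a)) +
        ∑ j ∈ N i, (U j a - U j (flipProfile i a)) := by
    have key : ∑ j ∈ insert i (N i), (U j a - U j (flipProfile i a)) =
        ∑ j, (U j a - U j (flipProfile i a)) := by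
      refine Finset.sum_subset (Finset.subset_univ _) ?_
      intro j _ hj
      simp only [Finset.mem_insert, not_or] at hj
      rw [hfar j hj.1 hj.2, sub_self]
    rw [pot, pot, ← Finset.sum_sub_distrib, ← key, Finset.sum_insert (hself i)]
  have hflip_i : flipProfile i a i = !a i := by
    simp [flipProfile]
  by_cases h : a i
  · rw [hsum]
    simp only [repUtil, hflip_i, h, Bool.not_true, if_pos, if_neg,
      Bool.false_eq_true, if_false, Finset.sum_sub_distrib]
    ring
  · have h' : a i = false := by simpa using h
    rw [hsum]
    simp only [repUtil, hflip_i, h', Bool.not_false, if_true,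
      Bool.false_eq_true, if_false, flipProfile_flip_flip, Finset.sum_sub_distrib]
    ring
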